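/- Let x, x_* ∈ ℂⁿ satisfy A x_* = b, let η ∈ ℂ^m with Aᴴη ≠ 0, let α ∈ ℝ, and set g = ηᴴ(b − Ax)/‖Aᴴη‖₂². Then ‖x − x_* + α·g·Aᴴη‖₂² = ‖x − x_*‖₂² + (α² − 2α)·φ(x, η). -/

import Mathlib

open Matrix Finset

noncomputable section

/-- Squared Euclidean norm `‖v‖₂²` of a complex vector. -/
def vecNormSq {k : ℕ} (v : Fin k → ℂ) : ℝ := ∑ i, ‖v i‖ ^ 2

variable {m n : ℕ}

/-- Squared Euclidean norm `‖A_{i,:}‖₂²` of the `i`-th row of `A`. -/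
def rowNormSq (A : Matrix (Fin m) (Fin n) ℂ) (i : Fin m) : ℝ := ∑ j, ‖A i j‖ ^ 2

/-- Squared Frobenius norm `‖A‖_F²`. -/
def frobSq (A : Matrix (Fin m) (Fin n) ℂ) : ℝ := ∑ i, ∑ j, ‖A i j‖ ^ 2

/-- `ψ_i(x) = |b_i − A_{i,:} x|² / ‖A_{i,:}‖₂²`. -/
def psi (A : Matrix (Fin m) (Fin n) ℂ) (b : Fin m → ℂ) (x : Fin n → ℂ) (i : Fin m) : ℝ :=
  ‖b i - A.mulVec x i‖ ^ 2 / rowNormSq A i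

/-- `max_{i ∈ [m]} ψ_i(x)`. -/
def psiMax (A : Matrix (Fin m) (Fin n) ℂ) (b : Fin m → ℂ) (x : Fin n → ℂ) : ℝ :=
  ⨆ i, psi A b x i

/-- The row submatrix `A_{S,:}` of `A`, realized by replacing the rows outside `S` with zero
(which changes neither the Frobenius norm nor the largest singular value). -/
def rowSub (A : Matrix (Fin m) (Fin n) ℂ) (S : Finset (Fin m)) : Matrix (Fin m) (Fin n) ℂ :=
  fun i j => if i ∈ S then A i j else 0

/-- `σ_r(A)²` : the smallest nonzero eigenvalue of `AᴴA`. -/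
def sigmaRSq (A : Matrix (Fin m) (Fin n) ℂ) : ℝ :=
  sInf {μ : ℝ | μ ≠ 0 ∧ ∃ i, (Matrix.isHermitian_conjTranspose_mul_self A).eigenvalues i = μ}

/-- `σ₁(M)²` : the largest eigenvalue of `MᴴM`, i.e. the largest singular value squared. -/
def sigma1Sq {k : Type*} [Fintype k] (M : Matrix k (Fin n) ℂ) : ℝ :=
  ⨆ i, (Matrix.isHermitian_conjTranspose_mul_self M).eigenvalues i

/-- `Û(x) = {i ∈ [m] : ψ_i(x) ≠ 0}`. -/
def Uhat (A : Matrix (Fin m) (Fin n) ℂ) (b : Fin m → ℂ) (x : Fin n → ℂ) : Finset (Fin m) :=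
  Finset.univ.filter fun i => psi A b x i ≠ 0

/-- The greedy index set `U(x)` with relaxation parameter `θ = 1/2`. -/
def Ugreedy (A : Matrix (Fin m) (Fin n) ℂ) (b : Fin m → ℂ) (x : Fin n → ℂ) : Finset (Fin m) :=
  Finset.univ.filter fun i =>
    (1 / 2) * psiMax A b x + (1 / 2) * (vecNormSq (b - A.mulVec x) / frobSq A) ≤ psi A b x i

/-- `η(x) = Σ_{i ∈ U(x)} (b_i − A_{i,:}x) e_i`. -/
def eta (A : Matrix (Fin m) (Fin n) ℂ) (b : Fin m → ℂ) (x : Fin n → ℂ) : Fin m → ℂ :=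
  fun i => if i ∈ Ugreedy A b x then b i - A.mulVec x i else 0

/-- `uᴴ v`, the conjugate dot product. -/
def dotc {k : ℕ} (u v : Fin k → ℂ) : ℂ := ∑ i, (starRingEnd ℂ) (u i) * v i

/-- `φ(x, η) = |ηᴴ(b − A x)|² / ‖Aᴴ η‖₂²`. -/
def phi (A : Matrix (Fin m) (Fin n) ℂ) (b : Fin m → ℂ) (x : Fin n → ℂ) (η : Fin m → ℂ) : ℝ :=
  ‖dotc η (b - A.mulVec x)‖ ^ 2 / vecNormSq (Aᴴ.mulVec η)

end

/-- sketched projection one-step identity: if `A x_* = b`, `Aᴴη ≠ 0` and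
`g = ηᴴ(b − Ax)/‖Aᴴη‖₂²`, then
`‖x − x_* + α g Aᴴη‖₂² = ‖x − x_*‖₂² + (α² − 2α) φ(x, η)`. -/
private lemma normSq_add_smul' (a b g : ℂ) :
    ‖a + g * b‖ ^ 2 = ‖a‖ ^ 2 + (g * ((starRingEnd ℂ) a * b) + (starRingEnd ℂ) g * ((starRingEnd ℂ) b * a)).re + ‖g‖ ^ 2 * ‖b‖ ^ 2 := by
  simp only [Complex.sq_norm]
  simp [Complex.normSq_apply, Complex.add_re, Complex.mul_re, Complex.mul_im, Complex.add_im]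
  ring

private lemma dotc_conjT {m n : ℕ} (A : Matrix (Fin m) (Fin n) ℂ) (η : Fin m → ℂ) (y : Fin n → ℂ) :
    dotc (Aᴴ.mulVec η) y = dotc η (A.mulVec y) := by
  simp only [dotc, mulVec, dotProduct, conjTranspose_apply, map_sum, _root_.map_mul,
    Finset.sum_mul, Finset.mul_sum, starRingEnd_apply, star_star]
  rw [Finset.sum_comm]
  congr 1; ext i; congr 1; ext j; ring

private lemma dotc_conj_symm {k : ℕ} (u v : Fin k → ℂ) :
    dotc u v = (starRingEnd ℂ) (dotc v u) := by
  simp [dotc, map_sum, mul_comm]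

private lemma expand_lemma {k : ℕ} (u w : Fin k → ℂ) (g : ℂ) :
    vecNormSq (u + g • w) =
      vecNormSq u + (g * dotc u w + (starRingEnd ℂ) g * dotc w u).re + ‖g‖ ^ 2 * vecNormSq w := by
  simp only [vecNormSq, dotc, Pi.add_apply, Pi.smul_apply, smul_eq_mul, normSq_add_smul',
    Finset.sum_add_distrib, Finset.mul_sum, ← Complex.re_sum]

theorem stmt16 {m n : ℕ} (A : Matrix (Fin m) (Fin n) ℂ) (b : Fin m → ℂ)
    (x xs : Fin n → ℂ) (hxs : A.mulVec xs = b)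
    (η : Fin m → ℂ) (hη : Aᴴ.mulVec η ≠ 0) (α : ℝ) :
    vecNormSq (x - xs +
        ((α : ℂ) * (dotc η (b - A.mulVec x) / (vecNormSq (Aᴴ.mulVec η) : ℂ))) • Aᴴ.mulVec η) =
      vecNormSq (x - xs) + (α ^ 2 - 2 * α) * phi A b x η := by
  set w := Aᴴ.mulVec η with hw
  set c := dotc η (b - A.mulVec x) with hcdef
  set N := vecNormSq w with hNdef
  have hNnn : 0 ≤ N := Finset.sum_nonneg fun i _ => by positivity
  have hN : 0 < N := by
    rcases hNnn.lt_or_eq with h | h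
    · exact h
    · exfalso; apply hη; funext i
      have := (Finset.sum_eq_zero_iff_of_nonneg (fun i _ => by positivity)).1 h.symm i (Finset.mem_univ i)
      simpa using this
  set g : ℂ := (α : ℂ) * (c / (N : ℂ)) with hg
  have hNne : (N : ℂ) ≠ 0 := by exact_mod_cast hN.ne'
  have hcw : dotc w (x - xs) = -c := by
    rw [dotc_conjT]
    have : A.mulVec (x - xs) = -(b - A.mulVec x) := by
      rw [Matrix.mulVec_sub, hxs]; ring_nf
    rw [this, hcdef]
    simp only [dotc, Pi.neg_apply, Pi.sub_apply, mul_neg, ← Finset.sum_neg_distrib]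
  have huw : dotc (x - xs) w = -(starRingEnd ℂ) c := by
    rw [dotc_conj_symm, hcw]; simp
  rw [expand_lemma, hcw, huw]
  have hcc : c * (starRingEnd ℂ) c = ((‖c‖ ^ 2 : ℝ) : ℂ) := by
    simp [Complex.mul_conj, Complex.normSq_eq_norm_sq]
  have hconj : (starRingEnd ℂ) g = (α : ℂ) * ((starRingEnd ℂ) c / (N : ℂ)) := by
    rw [hg]
    simp [map_div₀, Complex.conj_ofReal]
  have hre : (g * -(starRingEnd ℂ) c + (starRingEnd ℂ) g * -c).re = -2 * α * ‖c‖ ^ 2 / N := by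
    have h1 : g * -(starRingEnd ℂ) c + (starRingEnd ℂ) g * -c
        = ((-2 * α * ‖c‖ ^ 2 / N : ℝ) : ℂ) := by
      rw [hg, hconj]
      have h2 : (α : ℂ) * (c / (N : ℂ)) * -(starRingEnd ℂ) c +
          (α : ℂ) * ((starRingEnd ℂ) c / (N : ℂ)) * -c
          = (-2 * (α : ℂ) / (N : ℂ)) * (c * (starRingEnd ℂ) c) := by ring
      rw [h2, hcc]
      push_cast
      ring
    rw [h1, Complex.ofReal_re]
  rw [hre]
  have hng : ‖g‖ ^ 2 = α ^ 2 * ‖c‖ ^ 2 / N ^ 2 := by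
    rw [hg]
    rw [norm_mul, norm_div, Complex.norm_real, Complex.norm_real]
    rw [Real.norm_eq_abs, Real.norm_eq_abs, abs_of_pos hN]
    rw [mul_pow, div_pow, sq_abs]
    ring
  rw [hng, phi]
  rw [← hw, ← hcdef, ← hNdef]
  field_simp
  ring
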